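/- arXiv:1904.08962 — 3 statements merged into one kernel-verified Lean document; each statement's English description precedes it below -/
import Mathlib

section
/- (Lagrangian decoupling.) For the N-arm constrained restless bandit with stochastic availability, Lagrange multiplier λ > 0 and budget M, the joint Lagrangian-relaxed value function decomposes as a sum of single-arm Lagrangian values: for every belief vector π ∈ [0,1]^N and availability vector y ∈ {0,1}^N, J^λ(π, y) = Mλ/(1−β) + Σ_{n=1}^N J^λ_n(π_n, y_n). -/
open Set

noncomputable section

/-- Expected immediate reward (success probability) at belief `π`. -/
def rhoB (ρ0 ρ1 π : ℝ) : ℝ := π * ρ0 + (1 - π) * ρ1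

/-- Belief update after a play resulting in success. -/
def Gam1 (p00 p10 ρ0 ρ1 π : ℝ) : ℝ :=
  (π * ρ0 * p00 + (1 - π) * ρ1 * p10) / (π * ρ0 + (1 - π) * ρ1)

/-- Belief update after a play resulting in failure. -/
def Gam0 (p00 p10 ρ0 ρ1 π : ℝ) : ℝ :=
  (π * (1 - ρ0) * p00 + (1 - π) * (1 - ρ1) * p10) /
    (π * (1 - ρ0) + (1 - π) * (1 - ρ1))

/-- Belief update without observation (natural Markov evolution). -/
def gam (p00 p10 π : ℝ) : ℝ := π * p00 + (1 - π) * p10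

/-- Joint Lagrangian-relaxed Bellman operator for the `N`-arm constrained
restless bandit with stochastic availability: the maximum is over feasible
actions (`a n = false` whenever `y n = false`); the play constraint `‖a‖₁ = M`
is relaxed with multiplier `lam`, and the next-state expectation is over
independent observation and availability outcomes of the arms. -/
def TJoint (N : ℕ) (p00 p10 ρ0 ρ1 θ11 θ01 θ00 : Fin N → ℝ) (β lam : ℝ) (M : ℕ)
    (J : (Fin N → ℝ) → (Fin N → Bool) → ℝ)
    (π : Fin N → ℝ) (y : Fin N → Bool) : ℝ :=
  (Finset.univ.filter (fun a : Fin N → Bool => ∀ n, y n = false → a n = false)).sup'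
    (by exact ⟨fun _ => false, by simp⟩)
    (fun a =>
      (∑ n, if a n then rhoB (ρ0 n) (ρ1 n) (π n) else 0)
        + lam * ((M : ℝ) - ∑ n, (if a n then (1:ℝ) else 0))
        + β * ∑ o : Fin N → Bool, ∑ y' : Fin N → Bool,
            (∏ n,
              (if a n then
                  (if o n then rhoB (ρ0 n) (ρ1 n) (π n)
                   else 1 - rhoB (ρ0 n) (ρ1 n) (π n))
                else (if o n then (1:ℝ) else 0))
              *
              (if y' n then
                  (if a n then θ11 n else if y n then θ01 n else θ00 n)
                else 1 - (if a n then θ11 n else if y n then θ01 n else θ00 n)))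
            * J (fun n =>
                  if a n then
                    (if o n then Gam1 (p00 n) (p10 n) (ρ0 n) (ρ1 n) (π n)
                     else Gam0 (p00 n) (p10 n) (ρ0 n) (ρ1 n) (π n))
                  else gam (p00 n) (p10 n) (π n)) y')

/-- Bounded on the joint belief space `[0,1]^N × {0,1}^N`. -/
def BddOnN (N : ℕ) (J : (Fin N → ℝ) → (Fin N → Bool) → ℝ) : Prop :=
  ∃ C : ℝ, ∀ π : Fin N → ℝ, (∀ n, π n ∈ Icc (0:ℝ) 1) → ∀ y : Fin N → Bool, |J π y| ≤ C

/-- Single-arm Lagrangian Bellman operator (play reward `ρ(π) − lam`,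
no subsidy). -/
def TLag1 (p00 p10 ρ0 ρ1 θ11 θ01 θ00 β lam : ℝ) (J : ℝ → Bool → ℝ) :
    ℝ → Bool → ℝ :=
  fun π y =>
    if y then
      max
        (rhoB ρ0 ρ1 π - lam
          + β * rhoB ρ0 ρ1 π *
              (θ11 * J (Gam1 p00 p10 ρ0 ρ1 π) true +
                (1 - θ11) * J (Gam1 p00 p10 ρ0 ρ1 π) false)
          + β * (1 - rhoB ρ0 ρ1 π) *
              (θ11 * J (Gam0 p00 p10 ρ0 ρ1 π) true +
                (1 - θ11) * J (Gam0 p00 p10 ρ0 ρ1 π) false))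
        (β * (θ01 * J (gam p00 p10 π) true + (1 - θ01) * J (gam p00 p10 π) false))
    else β * (θ00 * J (gam p00 p10 π) true + (1 - θ00) * J (gam p00 p10 π) false)

/-- Bounded on `[0,1] × {0,1}`. -/
def BddOnIcc (J : ℝ → Bool → ℝ) : Prop :=
  ∃ C : ℝ, ∀ π ∈ Icc (0:ℝ) 1, ∀ y : Bool, |J π y| ≤ C


lemma sup'_const_add {α : Type*} (s : Finset α) (hs : s.Nonempty) (c : ℝ) (f : α → ℝ) :
    s.sup' hs (fun a => c + f a) = c + s.sup' hs f := by
  apply le_antisymm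
  · exact Finset.sup'_le _ _ fun a ha => by have := Finset.le_sup' f ha; linarith
  · obtain ⟨a, ha, hfa⟩ := Finset.exists_mem_eq_sup' hs f
    rw [hfa]
    exact Finset.le_sup' (fun a => c + f a) ha

lemma abs_sup'_sub_sup'_le {α : Type*} (s : Finset α) (hs : s.Nonempty) (f g : α → ℝ) (ε : ℝ)
    (h : ∀ a ∈ s, |f a - g a| ≤ ε) :
    |s.sup' hs f - s.sup' hs g| ≤ ε := by
  rw [abs_le]
  constructor
  · rw [neg_le, neg_sub, sub_le_iff_le_add]
    refine Finset.sup'_le _ _ fun a ha => ?_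
    have h1 := (abs_le.mp (h a ha)).1
    have h3 := Finset.le_sup' f ha
    linarith
  · rw [sub_le_iff_le_add]
    refine Finset.sup'_le _ _ fun a ha => ?_
    have h1 := (abs_le.mp (h a ha)).2
    have h3 := Finset.le_sup' g ha
    linarith

lemma sum_pi_bool_prod {N : ℕ} (g : Fin N → Bool → ℝ) :
    ∑ x : Fin N → Bool, ∏ n, g n (x n) = ∏ n, ∑ b, g n b := by
  rw [Finset.prod_univ_sum]
  rw [Fintype.piFinset_univ]

lemma pi_key {N : ℕ} (w : Fin N → Bool → ℝ) (hw : ∀ n, ∑ b, w n b = 1)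
    (n : Fin N) (f : Bool → ℝ) :
    ∑ x : Fin N → Bool, (∏ k, w k (x k)) * f (x n) = ∑ b, w n b * f b := by
  have hpt : ∀ x : Fin N → Bool,
      (∏ k, w k (x k)) * f (x n)
        = ∏ k, (Function.update w n (fun b => w n b * f b)) k (x k) := by
    intro x
    have e1 : (fun k => (Function.update w n (fun b => w n b * f b)) k (x k))
        = Function.update (fun k => w k (x k)) n (w n (x n) * f (x n)) := by
      funext k
      by_cases hk : k = n
      · subst hk; simp
      · simp [Function.update_of_ne hk]
    rw [e1, Finset.prod_update_of_mem (Finset.mem_univ n),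
      Finset.sdiff_singleton_eq_erase]
    rw [← Finset.mul_prod_erase Finset.univ (fun k => w k (x k)) (Finset.mem_univ n)]
    ring
  rw [Finset.sum_congr rfl fun x _ => hpt x, sum_pi_bool_prod]
  have e2 : (fun k => ∑ b, (Function.update w n (fun b => w n b * f b)) k b)
      = Function.update (fun k => ∑ b, w k b) n (∑ b, w n b * f b) := by
    funext k
    by_cases hk : k = n
    · subst hk; simp
    · simp [Function.update_of_ne hk]
  rw [e2, Finset.prod_update_of_mem (Finset.mem_univ n),
    Finset.sdiff_singleton_eq_erase]
  have : ∏ k ∈ Finset.univ.erase n, ∑ b, w k b = 1 :=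
    Finset.prod_eq_one fun k _ => hw k
  rw [this, mul_one]

lemma pi_decouple {N : ℕ} (w : Fin N → Bool → ℝ) (hw : ∀ n, ∑ b, w n b = 1)
    (f : Fin N → Bool → ℝ) (c : ℝ) :
    ∑ x : Fin N → Bool, (∏ n, w n (x n)) * (c + ∑ n, f n (x n))
      = c + ∑ n, ∑ b, w n b * f n b := by
  have hA : ∑ x : Fin N → Bool, ∏ n, w n (x n) = 1 := by
    rw [sum_pi_bool_prod]; exact Finset.prod_eq_one fun n _ => hw n
  have expand : ∀ x : Fin N → Bool,
      (∏ n, w n (x n)) * (c + ∑ n, f n (x n))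
        = (∏ n, w n (x n)) * c + ∑ n, (∏ k, w k (x k)) * f n (x n) := by
    intro x; rw [mul_add, Finset.mul_sum]
  rw [Finset.sum_congr rfl fun x _ => expand x, Finset.sum_add_distrib,
    ← Finset.sum_mul, hA, one_mul, Finset.sum_comm]
  congr 1
  exact Finset.sum_congr rfl fun n _ => pi_key w hw n (f n)

lemma pi_decouple2 {N : ℕ} (A B : Fin N → Bool → ℝ) (hA : ∀ n, ∑ b, A n b = 1)
    (hB : ∀ n, ∑ b, B n b = 1) (f : Fin N → Bool → Bool → ℝ) (c : ℝ) :
    ∑ o : Fin N → Bool, ∑ y : Fin N → Bool,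
      ((∏ n, A n (o n)) * (∏ n, B n (y n))) * (c + ∑ n, f n (o n) (y n))
      = c + ∑ n, ∑ b, A n b * ∑ b', B n b' * f n b b' := by
  have inner : ∀ o : Fin N → Bool,
      ∑ y : Fin N → Bool, ((∏ n, A n (o n)) * (∏ n, B n (y n))) * (c + ∑ n, f n (o n) (y n))
        = (∏ n, A n (o n)) * (c + ∑ n, ∑ b', B n b' * f n (o n) b') := by
    intro o
    rw [← pi_decouple B hB (fun n b' => f n (o n) b') c, Finset.mul_sum]
    exact Finset.sum_congr rfl fun y _ => by ring
  rw [Finset.sum_congr rfl fun o _ => inner o,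
    pi_decouple A hA (fun n b => ∑ b', B n b' * f n b b') c]

lemma pi_est2 {N : ℕ} (A B : Fin N → Bool → ℝ) (hA0 : ∀ n b, 0 ≤ A n b)
    (hB0 : ∀ n b, 0 ≤ B n b) (hA : ∀ n, ∑ b, A n b = 1) (hB : ∀ n, ∑ b, B n b = 1)
    (F : (Fin N → Bool) → (Fin N → Bool) → ℝ) (C : ℝ)
    (hF : ∀ o y, |F o y| ≤ C) :
    |∑ o : Fin N → Bool, ∑ y : Fin N → Bool,
      ((∏ n, A n (o n)) * (∏ n, B n (y n))) * F o y| ≤ C := by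
  have hA1 : ∑ x : Fin N → Bool, ∏ n, A n (x n) = 1 := by
    rw [sum_pi_bool_prod]; exact Finset.prod_eq_one fun n _ => hA n
  have hB1 : ∑ x : Fin N → Bool, ∏ n, B n (x n) = 1 := by
    rw [sum_pi_bool_prod]; exact Finset.prod_eq_one fun n _ => hB n
  calc |∑ o : Fin N → Bool, ∑ y : Fin N → Bool,
      ((∏ n, A n (o n)) * (∏ n, B n (y n))) * F o y|
      ≤ ∑ o : Fin N → Bool, ∑ y : Fin N → Bool,
        |((∏ n, A n (o n)) * (∏ n, B n (y n))) * F o y| := by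
        refine (Finset.abs_sum_le_sum_abs _ _).trans (Finset.sum_le_sum fun o _ => ?_)
        exact Finset.abs_sum_le_sum_abs _ _
    _ ≤ ∑ o : Fin N → Bool, ∑ y : Fin N → Bool,
        ((∏ n, A n (o n)) * (∏ n, B n (y n))) * C := by
        refine Finset.sum_le_sum fun o _ => Finset.sum_le_sum fun y _ => ?_
        have hw0 : 0 ≤ (∏ n, A n (o n)) * (∏ n, B n (y n)) :=
          mul_nonneg (Finset.prod_nonneg fun n _ => hA0 n (o n))
            (Finset.prod_nonneg fun n _ => hB0 n (y n))
        rw [abs_mul, abs_of_nonneg hw0]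
        exact mul_le_mul_of_nonneg_left (hF o y) hw0
    _ = C := by
        have e : ∀ o : Fin N → Bool, ∑ y : Fin N → Bool,
            ((∏ n, A n (o n)) * (∏ n, B n (y n))) * C
              = (∏ n, A n (o n)) * C := by
          intro o
          rw [show (fun y : Fin N → Bool => ((∏ n, A n (o n)) * (∏ n, B n (y n))) * C)
              = (fun y : Fin N → Bool => (∏ n, B n (y n)) * ((∏ n, A n (o n)) * C))
            from funext fun y => by ring]
          rw [← Finset.sum_mul, hB1, one_mul]
        rw [Finset.sum_congr rfl fun o _ => e o, ← Finset.sum_mul, hA1, one_mul]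

lemma sup'_filter_pi {N : ℕ} (y : Fin N → Bool) (h : Fin N → Bool → ℝ)
    (H : (Finset.univ.filter
      (fun a : Fin N → Bool => ∀ n, y n = false → a n = false)).Nonempty) :
    (Finset.univ.filter (fun a : Fin N → Bool => ∀ n, y n = false → a n = false)).sup'
      H (fun a => ∑ n, h n (a n))
      = ∑ n, (if y n then max (h n true) (h n false) else h n false) := by
  apply le_antisymm
  · refine Finset.sup'_le _ _ fun a ha => ?_
    simp only [Finset.mem_filter, Finset.mem_univ, true_and] at ha
    refine Finset.sum_le_sum fun n _ => ?_
    by_cases hy : y n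
    · simp only [hy, if_true]
      cases a n
      · exact le_max_right _ _
      · exact le_max_left _ _
    · simp only [hy, if_false]
      rw [ha n (by simpa using hy)]
      simp
  · set a : Fin N → Bool := fun n => y n && decide (h n false ≤ h n true) with ha
    have hmem : a ∈ Finset.univ.filter
        (fun a : Fin N → Bool => ∀ n, y n = false → a n = false) := by
      simp only [Finset.mem_filter, Finset.mem_univ, true_and]
      intro n hn
      simp [ha, hn]
    have heq : ∑ n, (if y n then max (h n true) (h n false) else h n false)
        = ∑ n, h n (a n) := by
      refine Finset.sum_congr rfl fun n _ => ?_
      by_cases hy : y n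
      · simp only [hy, if_true, ha]
        by_cases hle : h n false ≤ h n true
        · simp [hle, max_eq_left hle]
        · simp [hle, max_eq_right (le_of_not_ge hle)]
      · simp [hy, ha]
    rw [heq]
    exact Finset.le_sup' (fun a => ∑ n, h n (a n)) hmem

lemma sup'_filter_pi' {N : ℕ} (y : Fin N → Bool) (c : ℝ) (h : Fin N → Bool → ℝ)
    (H : (Finset.univ.filter
      (fun a : Fin N → Bool => ∀ n, y n = false → a n = false)).Nonempty) :
    (Finset.univ.filter (fun a : Fin N → Bool => ∀ n, y n = false → a n = false)).sup'
      H (fun a => c + ∑ n, h n (a n))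
      = c + ∑ n, (if y n then max (h n true) (h n false) else h n false) := by
  rw [sup'_const_add _ H c (fun a => ∑ n, h n (a n)), sup'_filter_pi y h H]

lemma rhoB_mem {ρ0 ρ1 π : ℝ} (h0 : 0 < ρ0) (h01 : ρ0 < ρ1) (h1 : ρ1 < 1)
    (hπ : π ∈ Icc (0:ℝ) 1) : rhoB ρ0 ρ1 π ∈ Icc (0:ℝ) 1 := by
  obtain ⟨hπ0, hπ1⟩ := hπ
  constructor <;> [skip; skip] <;> unfold rhoB <;> nlinarith

lemma gam_mem {p00 p10 π : ℝ} (h0 : p00 ∈ Icc (0:ℝ) 1) (h1 : p10 ∈ Icc (0:ℝ) 1)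
    (hπ : π ∈ Icc (0:ℝ) 1) : gam p00 p10 π ∈ Icc (0:ℝ) 1 := by
  obtain ⟨a, b⟩ := h0; obtain ⟨c, d⟩ := h1; obtain ⟨e, f⟩ := hπ
  constructor <;> unfold gam <;> nlinarith

lemma Gam1_mem {p00 p10 ρ0 ρ1 π : ℝ} (h0 : p00 ∈ Icc (0:ℝ) 1) (h1 : p10 ∈ Icc (0:ℝ) 1)
    (hρ0 : 0 < ρ0) (hρ01 : ρ0 < ρ1) (hρ1 : ρ1 < 1)
    (hπ : π ∈ Icc (0:ℝ) 1) : Gam1 p00 p10 ρ0 ρ1 π ∈ Icc (0:ℝ) 1 := by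
  obtain ⟨a, b⟩ := h0; obtain ⟨c, d⟩ := h1; obtain ⟨e, f⟩ := hπ
  have h1π : (0:ℝ) ≤ 1 - π := by linarith
  have hden : 0 < π * ρ0 + (1 - π) * ρ1 := by nlinarith
  unfold Gam1
  constructor
  · apply div_nonneg _ hden.le
    nlinarith [mul_nonneg (mul_nonneg e hρ0.le) a,
      mul_nonneg (mul_nonneg h1π (by linarith : (0:ℝ) ≤ ρ1)) c]
  · rw [div_le_one hden]
    nlinarith [mul_nonneg (mul_nonneg e hρ0.le) (by linarith : (0:ℝ) ≤ 1 - p00),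
      mul_nonneg (mul_nonneg h1π (by linarith : (0:ℝ) ≤ ρ1)) (by linarith : (0:ℝ) ≤ 1 - p10)]

lemma Gam0_mem {p00 p10 ρ0 ρ1 π : ℝ} (h0 : p00 ∈ Icc (0:ℝ) 1) (h1 : p10 ∈ Icc (0:ℝ) 1)
    (hρ0 : 0 < ρ0) (hρ01 : ρ0 < ρ1) (hρ1 : ρ1 < 1)
    (hπ : π ∈ Icc (0:ℝ) 1) : Gam0 p00 p10 ρ0 ρ1 π ∈ Icc (0:ℝ) 1 := by
  obtain ⟨a, b⟩ := h0; obtain ⟨c, d⟩ := h1; obtain ⟨e, f⟩ := hπ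
  have h1π : (0:ℝ) ≤ 1 - π := by linarith
  have hden : 0 < π * (1 - ρ0) + (1 - π) * (1 - ρ1) := by nlinarith
  unfold Gam0
  constructor
  · apply div_nonneg _ hden.le
    nlinarith [mul_nonneg (mul_nonneg e (by linarith : (0:ℝ) ≤ 1 - ρ0)) a,
      mul_nonneg (mul_nonneg h1π (by linarith : (0:ℝ) ≤ 1 - ρ1)) c]
  · rw [div_le_one hden]
    nlinarith [mul_nonneg (mul_nonneg e (by linarith : (0:ℝ) ≤ 1 - ρ0)) (by linarith : (0:ℝ) ≤ 1 - p00),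
      mul_nonneg (mul_nonneg h1π (by linarith : (0:ℝ) ≤ 1 - ρ1)) (by linarith : (0:ℝ) ≤ 1 - p10)]

set_option maxHeartbeats 2000000 in
/-- **Lagrangian decoupling.** The joint Lagrangian-relaxed
value function decomposes as `J^λ(π,y) = Mλ/(1−β) + Σ_n J^λ_n(π_n, y_n)`. -/
theorem stmt3 (N : ℕ) (p00 p10 ρ0 ρ1 θ11 θ01 θ00 : Fin N → ℝ) (β lam : ℝ) (M : ℕ)
    (hp00 : ∀ n, p00 n ∈ Icc (0:ℝ) 1) (hp10 : ∀ n, p10 n ∈ Icc (0:ℝ) 1)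
    (hρ0 : ∀ n, 0 < ρ0 n) (hρ01 : ∀ n, ρ0 n < ρ1 n) (hρ1 : ∀ n, ρ1 n < 1)
    (hθ11 : ∀ n, θ11 n ∈ Icc (0:ℝ) 1) (hθ01 : ∀ n, θ01 n ∈ Icc (0:ℝ) 1)
    (hθ00 : ∀ n, θ00 n ∈ Icc (0:ℝ) 1)
    (hβ : β ∈ Ioo (0:ℝ) 1) (hlam : 0 < lam)
    -- `Jn n` is the unique bounded fixed point of the single-arm Lagrangian equation
    (Jn : Fin N → ℝ → Bool → ℝ)
    (hJnb : ∀ n, BddOnIcc (Jn n))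
    (hJnfix : ∀ n, ∀ π ∈ Icc (0:ℝ) 1, ∀ y : Bool,
      TLag1 (p00 n) (p10 n) (ρ0 n) (ρ1 n) (θ11 n) (θ01 n) (θ00 n) β lam (Jn n) π y
        = Jn n π y)
    -- `J` is the unique bounded fixed point of the joint relaxed Bellman equation
    (J : (Fin N → ℝ) → (Fin N → Bool) → ℝ)
    (hJb : BddOnN N J)
    (hJfix : ∀ π : Fin N → ℝ, (∀ n, π n ∈ Icc (0:ℝ) 1) → ∀ y : Fin N → Bool,
      TJoint N p00 p10 ρ0 ρ1 θ11 θ01 θ00 β lam M J π y = J π y) :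
    ∀ π : Fin N → ℝ, (∀ n, π n ∈ Icc (0:ℝ) 1) → ∀ y : Fin N → Bool,
      J π y = (M : ℝ) * lam / (1 - β) + ∑ n, Jn n (π n) (y n) := by
  have hβpos : 0 < 1 - β := by linarith [hβ.2]
  set c : ℝ := (M : ℝ) * lam / (1 - β) with hcdef
  have hc' : lam * (M : ℝ) + β * c = c := by
    rw [hcdef]
    field_simp
    ring
  set G : (Fin N → ℝ) → (Fin N → Bool) → ℝ :=
    fun q w => c + ∑ n, Jn n (q n) (w n) with hGdef
  -- G is a fixed point of TJoint on valid beliefs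
  have hGfix : ∀ p : Fin N → ℝ, (∀ n, p n ∈ Icc (0:ℝ) 1) → ∀ z : Fin N → Bool,
      TJoint N p00 p10 ρ0 ρ1 θ11 θ01 θ00 β lam M G p z = G p z := by
    intro p hp z
    unfold TJoint
    set h : Fin N → Bool → ℝ := fun n b =>
      (if b then rhoB (ρ0 n) (ρ1 n) (p n) - lam else 0)
      + β * ∑ o : Bool,
          (if b then
              (if o then rhoB (ρ0 n) (ρ1 n) (p n)
               else 1 - rhoB (ρ0 n) (ρ1 n) (p n))
            else (if o then (1:ℝ) else 0))
          * ∑ w : Bool,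
              (if w then (if b then θ11 n else if z n then θ01 n else θ00 n)
               else 1 - (if b then θ11 n else if z n then θ01 n else θ00 n))
              * Jn n (if b then
                    (if o then Gam1 (p00 n) (p10 n) (ρ0 n) (ρ1 n) (p n)
                     else Gam0 (p00 n) (p10 n) (ρ0 n) (ρ1 n) (p n))
                  else gam (p00 n) (p10 n) (p n)) w
      with hh
    have key : ∀ a : Fin N → Bool,
        (∑ n, if a n then rhoB (ρ0 n) (ρ1 n) (p n) else 0)
          + lam * ((M : ℝ) - ∑ n, (if a n then (1:ℝ) else 0))
          + β * ∑ o : Fin N → Bool, ∑ y' : Fin N → Bool,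
              (∏ n,
                (if a n then
                    (if o n then rhoB (ρ0 n) (ρ1 n) (p n)
                     else 1 - rhoB (ρ0 n) (ρ1 n) (p n))
                  else (if o n then (1:ℝ) else 0))
                *
                (if y' n then
                    (if a n then θ11 n else if z n then θ01 n else θ00 n)
                  else 1 - (if a n then θ11 n else if z n then θ01 n else θ00 n)))
              * G (fun n =>
                    if a n then
                      (if o n then Gam1 (p00 n) (p10 n) (ρ0 n) (ρ1 n) (p n)
                       else Gam0 (p00 n) (p10 n) (ρ0 n) (ρ1 n) (p n))
                    else gam (p00 n) (p10 n) (p n)) y'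
        = c + ∑ n, h n (a n) := by
      intro a
      have hA1 : ∀ n, ∑ b : Bool,
          (if a n then
              (if b then rhoB (ρ0 n) (ρ1 n) (p n)
               else 1 - rhoB (ρ0 n) (ρ1 n) (p n))
            else (if b then (1:ℝ) else 0)) = 1 := by
        intro n
        cases a n <;> simp
      have hB1 : ∀ n, ∑ b : Bool,
          (if b then (if a n then θ11 n else if z n then θ01 n else θ00 n)
           else 1 - (if a n then θ11 n else if z n then θ01 n else θ00 n)) = 1 := by
        intro n
        simp
      simp only [hGdef, Finset.prod_mul_distrib]
      rw [pi_decouple2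
        (fun n b =>
          (if a n then
              (if b then rhoB (ρ0 n) (ρ1 n) (p n)
               else 1 - rhoB (ρ0 n) (ρ1 n) (p n))
            else (if b then (1:ℝ) else 0)))
        (fun n b =>
          (if b then (if a n then θ11 n else if z n then θ01 n else θ00 n)
           else 1 - (if a n then θ11 n else if z n then θ01 n else θ00 n)))
        hA1 hB1
        (fun n b b' => Jn n (if a n then
              (if b then Gam1 (p00 n) (p10 n) (ρ0 n) (ρ1 n) (p n)
               else Gam0 (p00 n) (p10 n) (ρ0 n) (ρ1 n) (p n))
            else gam (p00 n) (p10 n) (p n)) b') c]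
      simp only [hh]
      rw [Finset.sum_add_distrib, ← Finset.mul_sum]
      have hS3 : (∑ n, if a n then rhoB (ρ0 n) (ρ1 n) (p n) - lam else 0)
          = (∑ n, if a n then rhoB (ρ0 n) (ρ1 n) (p n) else 0)
            - lam * ∑ n, (if a n then (1:ℝ) else 0) := by
        rw [Finset.mul_sum, ← Finset.sum_sub_distrib]
        refine Finset.sum_congr rfl fun n _ => ?_
        cases a n <;> simp
      rw [hS3]
      linear_combination hc'
    refine (Finset.sup'_congr _ rfl fun a _ => key a).trans ?_
    rw [sup'_filter_pi' z c h]
    simp only [hGdef]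
    congr 1
    refine Finset.sum_congr rfl fun n _ => ?_
    rw [← hJnfix n (p n) (hp n) (z n)]
    unfold TLag1
    by_cases hz : z n
    · simp only [hz, if_true]
      have h1 : h n true
          = rhoB (ρ0 n) (ρ1 n) (p n) - lam
            + β * rhoB (ρ0 n) (ρ1 n) (p n) *
                (θ11 n * Jn n (Gam1 (p00 n) (p10 n) (ρ0 n) (ρ1 n) (p n)) true +
                  (1 - θ11 n) * Jn n (Gam1 (p00 n) (p10 n) (ρ0 n) (ρ1 n) (p n)) false)
            + β * (1 - rhoB (ρ0 n) (ρ1 n) (p n)) *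
                (θ11 n * Jn n (Gam0 (p00 n) (p10 n) (ρ0 n) (ρ1 n) (p n)) true +
                  (1 - θ11 n) * Jn n (Gam0 (p00 n) (p10 n) (ρ0 n) (ρ1 n) (p n)) false) := by
        simp only [hh, Fintype.sum_bool]
        norm_num
        ring
      have h2 : h n false
          = β * (θ01 n * Jn n (gam (p00 n) (p10 n) (p n)) true
              + (1 - θ01 n) * Jn n (gam (p00 n) (p10 n) (p n)) false) := by
        simp only [hh, hz, Fintype.sum_bool]
        norm_num
        try ring
      rw [h1, h2]
    · simp only [hz, if_false]
      have hz' : z n = false := by simpa using hz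
      simp only [hh, hz', Fintype.sum_bool]
      norm_num
      try ring
  -- boundedness of the difference
  obtain ⟨CJ, hCJ⟩ := hJb
  choose Cn hCn using hJnb
  set C0 : ℝ := CJ + (|c| + ∑ n, Cn n) with hC0def
  have hbound : ∀ p : Fin N → ℝ, (∀ n, p n ∈ Icc (0:ℝ) 1) → ∀ z : Fin N → Bool,
      |J p z - G p z| ≤ C0 := by
    intro p hp z
    have h1 := hCJ p hp z
    have h2 : |G p z| ≤ |c| + ∑ n, Cn n := by
      simp only [hGdef]
      refine (abs_add_le _ _).trans (add_le_add le_rfl ?_)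
      refine (Finset.abs_sum_le_sum_abs _ _).trans (Finset.sum_le_sum fun n _ => ?_)
      exact hCn n (p n) (hp n) (z n)
    calc |J p z - G p z| ≤ |J p z| + |G p z| := abs_sub _ _
      _ ≤ C0 := by rw [hC0def]; linarith
  have hC0 : 0 ≤ C0 :=
    le_trans (abs_nonneg _) (hbound (fun _ => (0:ℝ)) (fun _ => by norm_num) (fun _ => false))
  -- contraction step
  have hstep : ∀ C' : ℝ, 0 ≤ C' →
      (∀ p : Fin N → ℝ, (∀ n, p n ∈ Icc (0:ℝ) 1) → ∀ z : Fin N → Bool,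
        |J p z - G p z| ≤ C') →
      ∀ p : Fin N → ℝ, (∀ n, p n ∈ Icc (0:ℝ) 1) → ∀ z : Fin N → Bool,
        |J p z - G p z| ≤ β * C' := by
    intro C' hC'0 hC' p hp z
    rw [← hJfix p hp z, ← hGfix p hp z]
    unfold TJoint
    apply abs_sup'_sub_sup'_le
    intro a ha
    have hdiff :
        ((∑ n, if a n then rhoB (ρ0 n) (ρ1 n) (p n) else 0)
          + lam * ((M : ℝ) - ∑ n, (if a n then (1:ℝ) else 0))
          + β * ∑ o : Fin N → Bool, ∑ y' : Fin N → Bool,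
              (∏ n,
                (if a n then
                    (if o n then rhoB (ρ0 n) (ρ1 n) (p n)
                     else 1 - rhoB (ρ0 n) (ρ1 n) (p n))
                  else (if o n then (1:ℝ) else 0))
                *
                (if y' n then
                    (if a n then θ11 n else if z n then θ01 n else θ00 n)
                  else 1 - (if a n then θ11 n else if z n then θ01 n else θ00 n)))
              * J (fun n =>
                    if a n then
                      (if o n then Gam1 (p00 n) (p10 n) (ρ0 n) (ρ1 n) (p n)
                       else Gam0 (p00 n) (p10 n) (ρ0 n) (ρ1 n) (p n))
                    else gam (p00 n) (p10 n) (p n)) y')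
        - ((∑ n, if a n then rhoB (ρ0 n) (ρ1 n) (p n) else 0)
          + lam * ((M : ℝ) - ∑ n, (if a n then (1:ℝ) else 0))
          + β * ∑ o : Fin N → Bool, ∑ y' : Fin N → Bool,
              (∏ n,
                (if a n then
                    (if o n then rhoB (ρ0 n) (ρ1 n) (p n)
                     else 1 - rhoB (ρ0 n) (ρ1 n) (p n))
                  else (if o n then (1:ℝ) else 0))
                *
                (if y' n then
                    (if a n then θ11 n else if z n then θ01 n else θ00 n)
                  else 1 - (if a n then θ11 n else if z n then θ01 n else θ00 n)))
              * G (fun n =>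
                    if a n then
                      (if o n then Gam1 (p00 n) (p10 n) (ρ0 n) (ρ1 n) (p n)
                       else Gam0 (p00 n) (p10 n) (ρ0 n) (ρ1 n) (p n))
                    else gam (p00 n) (p10 n) (p n)) y')
        = β * ∑ o : Fin N → Bool, ∑ y' : Fin N → Bool,
            ((∏ n,
                (if a n then
                    (if o n then rhoB (ρ0 n) (ρ1 n) (p n)
                     else 1 - rhoB (ρ0 n) (ρ1 n) (p n))
                  else (if o n then (1:ℝ) else 0)))
              * (∏ n,
                (if y' n then
                    (if a n then θ11 n else if z n then θ01 n else θ00 n)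
                  else 1 - (if a n then θ11 n else if z n then θ01 n else θ00 n))))
            * (J (fun n =>
                    if a n then
                      (if o n then Gam1 (p00 n) (p10 n) (ρ0 n) (ρ1 n) (p n)
                       else Gam0 (p00 n) (p10 n) (ρ0 n) (ρ1 n) (p n))
                    else gam (p00 n) (p10 n) (p n)) y'
                - G (fun n =>
                    if a n then
                      (if o n then Gam1 (p00 n) (p10 n) (ρ0 n) (ρ1 n) (p n)
                       else Gam0 (p00 n) (p10 n) (ρ0 n) (ρ1 n) (p n))
                    else gam (p00 n) (p10 n) (p n)) y') := by
      have merge :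
          (∑ o : Fin N → Bool, ∑ y' : Fin N → Bool,
              (∏ n,
                (if a n then
                    (if o n then rhoB (ρ0 n) (ρ1 n) (p n)
                     else 1 - rhoB (ρ0 n) (ρ1 n) (p n))
                  else (if o n then (1:ℝ) else 0))
                *
                (if y' n then
                    (if a n then θ11 n else if z n then θ01 n else θ00 n)
                  else 1 - (if a n then θ11 n else if z n then θ01 n else θ00 n)))
              * J (fun n =>
                    if a n then
                      (if o n then Gam1 (p00 n) (p10 n) (ρ0 n) (ρ1 n) (p n)
                       else Gam0 (p00 n) (p10 n) (ρ0 n) (ρ1 n) (p n))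
                    else gam (p00 n) (p10 n) (p n)) y')
          - (∑ o : Fin N → Bool, ∑ y' : Fin N → Bool,
              (∏ n,
                (if a n then
                    (if o n then rhoB (ρ0 n) (ρ1 n) (p n)
                     else 1 - rhoB (ρ0 n) (ρ1 n) (p n))
                  else (if o n then (1:ℝ) else 0))
                *
                (if y' n then
                    (if a n then θ11 n else if z n then θ01 n else θ00 n)
                  else 1 - (if a n then θ11 n else if z n then θ01 n else θ00 n)))
              * G (fun n =>
                    if a n then
                      (if o n then Gam1 (p00 n) (p10 n) (ρ0 n) (ρ1 n) (p n)
                       else Gam0 (p00 n) (p10 n) (ρ0 n) (ρ1 n) (p n))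
                    else gam (p00 n) (p10 n) (p n)) y')
          = ∑ o : Fin N → Bool, ∑ y' : Fin N → Bool,
            ((∏ n,
                (if a n then
                    (if o n then rhoB (ρ0 n) (ρ1 n) (p n)
                     else 1 - rhoB (ρ0 n) (ρ1 n) (p n))
                  else (if o n then (1:ℝ) else 0)))
              * (∏ n,
                (if y' n then
                    (if a n then θ11 n else if z n then θ01 n else θ00 n)
                  else 1 - (if a n then θ11 n else if z n then θ01 n else θ00 n))))
            * (J (fun n =>
                    if a n then
                      (if o n then Gam1 (p00 n) (p10 n) (ρ0 n) (ρ1 n) (p n)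
                       else Gam0 (p00 n) (p10 n) (ρ0 n) (ρ1 n) (p n))
                    else gam (p00 n) (p10 n) (p n)) y' - G (fun n =>
                    if a n then
                      (if o n then Gam1 (p00 n) (p10 n) (ρ0 n) (ρ1 n) (p n)
                       else Gam0 (p00 n) (p10 n) (ρ0 n) (ρ1 n) (p n))
                    else gam (p00 n) (p10 n) (p n)) y') := by
        rw [← Finset.sum_sub_distrib]
        refine Finset.sum_congr rfl fun o _ => ?_
        rw [← Finset.sum_sub_distrib]
        refine Finset.sum_congr rfl fun y' _ => ?_
        rw [Finset.prod_mul_distrib]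
        ring
      rw [← merge]
      ring
    rw [hdiff, abs_mul, abs_of_nonneg hβ.1.le]
    refine mul_le_mul_of_nonneg_left ?_ hβ.1.le
    have hvalid : ∀ o : Fin N → Bool, ∀ n : Fin N,
        (if a n then
            (if o n then Gam1 (p00 n) (p10 n) (ρ0 n) (ρ1 n) (p n)
             else Gam0 (p00 n) (p10 n) (ρ0 n) (ρ1 n) (p n))
          else gam (p00 n) (p10 n) (p n)) ∈ Icc (0:ℝ) 1 := by
      intro o n
      by_cases han : a n
      · by_cases hon : o n
        · simp only [han, hon, if_true]
          exact Gam1_mem (hp00 n) (hp10 n) (hρ0 n) (hρ01 n) (hρ1 n) (hp n)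
        · simp only [han, hon, if_true, if_false]
          exact Gam0_mem (hp00 n) (hp10 n) (hρ0 n) (hρ01 n) (hρ1 n) (hp n)
      · simp only [han, if_false]
        exact gam_mem (hp00 n) (hp10 n) (hp n)
    refine pi_est2
      (fun n b =>
        (if a n then
            (if b then rhoB (ρ0 n) (ρ1 n) (p n)
             else 1 - rhoB (ρ0 n) (ρ1 n) (p n))
          else (if b then (1:ℝ) else 0)))
      (fun n b =>
        (if b then (if a n then θ11 n else if z n then θ01 n else θ00 n)
         else 1 - (if a n then θ11 n else if z n then θ01 n else θ00 n)))
      ?_ ?_ ?_ ?_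
      (fun o y' =>
        J (fun n =>
            if a n then
              (if o n then Gam1 (p00 n) (p10 n) (ρ0 n) (ρ1 n) (p n)
               else Gam0 (p00 n) (p10 n) (ρ0 n) (ρ1 n) (p n))
            else gam (p00 n) (p10 n) (p n)) y' - G (fun n =>
            if a n then
              (if o n then Gam1 (p00 n) (p10 n) (ρ0 n) (ρ1 n) (p n)
               else Gam0 (p00 n) (p10 n) (ρ0 n) (ρ1 n) (p n))
            else gam (p00 n) (p10 n) (p n)) y')
      C' ?_
    · intro n b
      have := rhoB_mem (hρ0 n) (hρ01 n) (hρ1 n) (hp n)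
      by_cases han : a n <;> cases b <;> simp [han] <;>
        first
          | linarith [this.1, this.2]
          | norm_num
    · intro n b
      by_cases han : a n <;> by_cases hzn : z n <;> cases b <;> simp [han, hzn] <;>
        first
          | linarith [(hθ11 n).1, (hθ11 n).2]
          | linarith [(hθ01 n).1, (hθ01 n).2]
          | linarith [(hθ00 n).1, (hθ00 n).2]
    · intro n; cases han : a n <;> simp [han]
    · intro n; simp
    · intro o y'
      exact hC' _ (hvalid o) y'
  -- iterate the contraction
  have hiter : ∀ k : ℕ, ∀ p : Fin N → ℝ, (∀ n, p n ∈ Icc (0:ℝ) 1) → ∀ z : Fin N → Bool,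
      |J p z - G p z| ≤ β ^ k * C0 := by
    intro k
    induction k with
    | zero => simpa using hbound
    | succ k ih =>
      intro p hp z
      have hk0 : 0 ≤ β ^ k * C0 := mul_nonneg (pow_nonneg hβ.1.le k) hC0
      have := hstep (β ^ k * C0) hk0 ih p hp z
      calc |J p z - G p z| ≤ β * (β ^ k * C0) := this
        _ = β ^ (k + 1) * C0 := by ring
  intro π hπ y
  have htend : Filter.Tendsto (fun k : ℕ => β ^ k * C0) Filter.atTop (nhds 0) := by
    have := tendsto_pow_atTop_nhds_zero_of_lt_one hβ.1.le hβ.2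
    simpa using this.mul_const C0
  have habs : |J π y - G π y| ≤ 0 :=
    ge_of_tendsto' htend (fun k => hiter k π hπ y)
  have : J π y = G π y := by
    have := abs_nonpos_iff.mp habs
    linarith [sub_eq_zero.mp this]
  rw [this, hGdef]
end
end

section
/- (Ordering of belief updates.) Suppose 0 < ρ0 < ρ1 < 1 and 0 ≤ p10 < p00 ≤ 1. Then for every π ∈ (0,1), the belief updates satisfy the strict ordering p10 < Γ1(π) < Γ0(π) < p00. -/
open Set

noncomputable section

/-- **Ordering of belief updates.** If `0 < ρ0 < ρ1 < 1` and
`0 ≤ p10 < p00 ≤ 1`, then for every `π ∈ (0,1)`,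
`p10 < Γ1(π) < Γ0(π) < p00`. -/
theorem stmt17 (p00 p10 ρ0 ρ1 : ℝ)
    (hρ0 : 0 < ρ0) (hρ01 : ρ0 < ρ1) (hρ1 : ρ1 < 1)
    (hp10 : 0 ≤ p10) (hp : p10 < p00) (hp00 : p00 ≤ 1) :
    ∀ π ∈ Ioo (0:ℝ) 1,
      p10 < Gam1 p00 p10 ρ0 ρ1 π ∧
      Gam1 p00 p10 ρ0 ρ1 π < Gam0 p00 p10 ρ0 ρ1 π ∧
      Gam0 p00 p10 ρ0 ρ1 π < p00 := by
  rintro π ⟨hπ0, hπ1⟩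
  have h1π : 0 < 1 - π := by linarith
  have hd1 : 0 < π * ρ0 + (1 - π) * ρ1 := by nlinarith
  have hd0 : 0 < π * (1 - ρ0) + (1 - π) * (1 - ρ1) := by nlinarith
  refine ⟨?_, ?_, ?_⟩
  · rw [Gam1, lt_div_iff₀ hd1]
    nlinarith [mul_pos hπ0 hρ0]
  · rw [Gam1, Gam0, div_lt_div_iff₀ hd1 hd0]
    nlinarith [mul_pos (mul_pos hπ0 h1π) (mul_pos (sub_pos.2 hρ01) (sub_pos.2 hp))]
  · rw [Gam0, div_lt_iff₀ hd0]
    nlinarith [mul_pos h1π (sub_pos.2 hρ1)]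
end
end

section
/- (Monotonicity and comparison of belief updates.) Suppose 0 < ρ0 < ρ1 < 1 and p10 ≤ p00. Then the maps γ, Γ1 and Γ0 are monotone nondecreasing on [0,1], and for every π ∈ [0,1] they satisfy Γ1(π) ≤ γ(π) ≤ Γ0(π). -/
open Set

noncomputable section

/-- **Monotonicity and comparison of belief updates.** If
`0 < ρ0 < ρ1 < 1` and `p10 ≤ p00` (with `p00, p10 ∈ [0,1]`), then `γ`, `Γ1`
and `Γ0` are monotone nondecreasing on `[0,1]`, and
`Γ1(π) ≤ γ(π) ≤ Γ0(π)` for every `π ∈ [0,1]`. -/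
theorem stmt19 (p00 p10 ρ0 ρ1 : ℝ)
    (hp00 : p00 ∈ Icc (0:ℝ) 1) (hp10 : p10 ∈ Icc (0:ℝ) 1)
    (hρ0 : 0 < ρ0) (hρ01 : ρ0 < ρ1) (hρ1 : ρ1 < 1)
    (hp : p10 ≤ p00) :
    MonotoneOn (gam p00 p10) (Icc (0:ℝ) 1)
    ∧ MonotoneOn (Gam1 p00 p10 ρ0 ρ1) (Icc (0:ℝ) 1)
    ∧ MonotoneOn (Gam0 p00 p10 ρ0 ρ1) (Icc (0:ℝ) 1)
    ∧ (∀ π ∈ Icc (0:ℝ) 1,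
        Gam1 p00 p10 ρ0 ρ1 π ≤ gam p00 p10 π ∧
        gam p00 p10 π ≤ Gam0 p00 p10 ρ0 ρ1 π) := by
  obtain ⟨h0, h1⟩ := hp00
  obtain ⟨h2, h3⟩ := hp10
  have hρ1' : (0:ℝ) < ρ1 := hρ0.trans hρ01
  have hρ0' : ρ0 < 1 := hρ01.trans hρ1
  have D1pos : ∀ π ∈ Icc (0:ℝ) 1, 0 < π * ρ0 + (1 - π) * ρ1 := by
    intro π ⟨ha, hb⟩
    rcases eq_or_lt_of_le ha with h | h
    · simp [← h]; linarith
    · nlinarith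
  have D0pos : ∀ π ∈ Icc (0:ℝ) 1, 0 < π * (1 - ρ0) + (1 - π) * (1 - ρ1) := by
    intro π ⟨ha, hb⟩
    rcases eq_or_lt_of_le hb with h | h
    · simp [h]; linarith
    · nlinarith
  refine ⟨?_, ?_, ?_, ?_⟩
  · intro a ha b hb hab
    simp only [gam]
    nlinarith
  · intro a ha b hb hab
    simp only [Gam1]
    rw [div_le_div_iff₀ (D1pos a ha) (D1pos b hb)]
    nlinarith [mul_nonneg (mul_nonneg (sub_nonneg.2 hab) (sub_nonneg.2 hp)) (mul_pos hρ0 hρ1').le]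
  · intro a ha b hb hab
    simp only [Gam0]
    rw [div_le_div_iff₀ (D0pos a ha) (D0pos b hb)]
    nlinarith [mul_nonneg (mul_nonneg (sub_nonneg.2 hab) (sub_nonneg.2 hp))
      (mul_pos (by linarith : (0:ℝ) < 1 - ρ0) (by linarith : (0:ℝ) < 1 - ρ1)).le]
  · intro π hπ
    obtain ⟨ha, hb⟩ := hπ
    constructor
    · rw [Gam1, gam, div_le_iff₀ (D1pos π ⟨ha, hb⟩)]
      nlinarith [mul_nonneg (mul_nonneg (mul_nonneg ha (by linarith : (0:ℝ) ≤ 1 - π))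
        (by linarith : (0:ℝ) ≤ ρ1 - ρ0)) (sub_nonneg.2 hp)]
    · rw [Gam0, gam, le_div_iff₀ (D0pos π ⟨ha, hb⟩)]
      nlinarith [mul_nonneg (mul_nonneg (mul_nonneg ha (by linarith : (0:ℝ) ≤ 1 - π))
        (by linarith : (0:ℝ) ≤ ρ1 - ρ0)) (sub_nonneg.2 hp)]
end
end
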